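/- Let H0, H1 be complex Hilbert spaces, D, D* closed subspaces of H0, V : D → D* a surjective linear isometry, Δ = H0 ⊖ D, Δ* = H0 ⊖ D*, and let U0 = [[A0,B0],[C0,0]] : H0 ⊕ Δ* → H0 ⊕ Δ be the universal colligation (A0 h = V(P_D h), B0 δ* = δ*, C0 h = P_Δ h). Then a bounded operator W on H0 ⊕ H1 is unitary and satisfies W(d, 0) = (V d, 0) for all d ∈ D if and only if there exists a unitary operator U1 = [[A1,B1],[C1,D1]] : H1 ⊕ Δ → H1 ⊕ Δ* such that W equals the feedback connection F_ℓ(U0,U1), i.e. W(h, h1) = (A0 h + B0 D1 C0 h + B0 C1 h1, B1 C0 h + A1 h1) for all h ∈ H0, h1 ∈ H1. In this case U1 is recovered from W by A1 = P_{H1} W|_{H1}, B1 δ = P_{H1} W(δ, 0) for δ ∈ Δ, C1 h1 = P_{Δ*}(first component of W(0,h1)), D1 δ = P_{Δ*}(first component of W(δ,0)). -/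

import Mathlib

open ContinuousLinearMap

/-- **Structure of unitary extensions of the isometry `V`.**
With `H0, H1` Hilbert spaces, `D, D*` closed subspaces of `H0`, `V : D → D*` a surjective
linear isometry, `Δ = H0 ⊖ D`, `Δ* = H0 ⊖ D*` and `U0 = [[A0,B0],[C0,0]]` the universal
colligation, a bounded operator `W` on `H0 ⊕ H1` is unitary and extends `V` if and only if
`W = F_ℓ(U0, U1)` for some unitary colligation `U1 = [[A1,B1],[C1,D1]] : H1 ⊕ Δ → H1 ⊕ Δ*`;
in that case `U1` is recovered from `W` by compression. -/
private lemma stmt11_inner_pres {H0 H1 : Type*}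
    [NormedAddCommGroup H0] [InnerProductSpace ℂ H0] [CompleteSpace H0]
    [NormedAddCommGroup H1] [InnerProductSpace ℂ H1] [CompleteSpace H1]
    (W : (H0 × H1) →L[ℂ] (H0 × H1))
    (hnorm : ∀ p : H0 × H1, ‖(W p).1‖ ^ 2 + ‖(W p).2‖ ^ 2 = ‖p.1‖ ^ 2 + ‖p.2‖ ^ 2) :
    ∀ p q : H0 × H1,
      (inner ℂ (W p).1 (W q).1 : ℂ) + inner ℂ (W p).2 (W q).2 =
        inner ℂ p.1 q.1 + inner ℂ p.2 q.2 := by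
  let e := WithLp.linearEquiv 2 ℂ (H0 × H1)
  let f : WithLp 2 (H0 × H1) →ₗᵢ[ℂ] WithLp 2 (H0 × H1) :=
    { toLinearMap := e.symm.toLinearMap ∘ₗ W.toLinearMap ∘ₗ e.toLinearMap
      norm_map' := by
        intro x
        rw [WithLp.prod_norm_eq_of_L2, WithLp.prod_norm_eq_of_L2]
        congr 1
        exact hnorm (e x) }
  intro p q
  exact f.inner_map_map (e.symm p) (e.symm q)

theorem stmt_11 {H0 H1 : Type*}
    [NormedAddCommGroup H0] [InnerProductSpace ℂ H0] [CompleteSpace H0]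
    [NormedAddCommGroup H1] [InnerProductSpace ℂ H1] [CompleteSpace H1]
    (D Dst : Submodule ℂ H0) [CompleteSpace D] [CompleteSpace Dst]
    (V : D ≃ₗᵢ[ℂ] Dst)
    (W : (H0 × H1) →L[ℂ] (H0 × H1)) :
    (((∀ p : H0 × H1, ‖(W p).1‖ ^ 2 + ‖(W p).2‖ ^ 2 = ‖p.1‖ ^ 2 + ‖p.2‖ ^ 2) ∧
        Function.Surjective W) ∧
      (∀ d : D, W ((d : H0), (0 : H1)) = ((V d : H0), 0)) ↔
      (∃ (A1 : H1 →L[ℂ] H1) (B1 : Dᗮ →L[ℂ] H1) (C1 : H1 →L[ℂ] Dstᗮ) (D1 : Dᗮ →L[ℂ] Dstᗮ),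
        -- `U1 = [[A1,B1],[C1,D1]]` is a unitary colligation
        (∀ (h1 : H1) (δ : Dᗮ),
            ‖A1 h1 + B1 δ‖ ^ 2 + ‖C1 h1 + D1 δ‖ ^ 2 = ‖h1‖ ^ 2 + ‖δ‖ ^ 2) ∧
        (∀ (y : H1) (ε : Dstᗮ), ∃ (h1 : H1) (δ : Dᗮ),
            A1 h1 + B1 δ = y ∧ C1 h1 + D1 δ = ε) ∧
        -- `W` equals the feedback connection `F_ℓ(U0, U1)`
        (∀ (h : H0) (h1 : H1),
          W (h, h1) =
            ((V (Submodule.orthogonalProjectionOnto D h) : H0)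
                + ((D1 (Submodule.orthogonalProjectionOnto Dᗮ h) : Dstᗮ) : H0)
                + ((C1 h1 : Dstᗮ) : H0),
              B1 (Submodule.orthogonalProjectionOnto Dᗮ h) + A1 h1)))) ∧
    -- in this case `U1` is recovered from `W`
    (∀ (A1 : H1 →L[ℂ] H1) (B1 : Dᗮ →L[ℂ] H1) (C1 : H1 →L[ℂ] Dstᗮ) (D1 : Dᗮ →L[ℂ] Dstᗮ),
      (∀ (h : H0) (h1 : H1),
        W (h, h1) =
          ((V (Submodule.orthogonalProjectionOnto D h) : H0)
              + ((D1 (Submodule.orthogonalProjectionOnto Dᗮ h) : Dstᗮ) : H0)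
              + ((C1 h1 : Dstᗮ) : H0),
            B1 (Submodule.orthogonalProjectionOnto Dᗮ h) + A1 h1)) →
      (∀ h1 : H1, A1 h1 = (W (0, h1)).2) ∧
      (∀ δ : Dᗮ, B1 δ = (W ((δ : H0), 0)).2) ∧
      (∀ h1 : H1, C1 h1 = Submodule.orthogonalProjectionOnto Dstᗮ ((W (0, h1)).1)) ∧
      (∀ δ : Dᗮ, D1 δ = Submodule.orthogonalProjectionOnto Dstᗮ ((W ((δ : H0), 0)).1))) := by
  constructor
  · constructor
    · rintro ⟨⟨hnorm, hsurjW⟩, hext⟩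
      have hip := stmt11_inner_pres W hnorm
      -- the first component of `W (δ, 0)` lies in `Dstᗮ`
      have mem1 : ∀ δ : Dᗮ, (W ((δ : H0), 0)).1 ∈ Dstᗮ := by
        intro δ
        rw [Submodule.mem_orthogonal]
        intro u hu
        have h1 := hip ((V.symm ⟨u, hu⟩ : H0), (0 : H1)) ((δ : H0), (0 : H1))
        rw [hext (V.symm ⟨u, hu⟩)] at h1
        simpa [Submodule.inner_right_of_mem_orthogonal (V.symm ⟨u, hu⟩).2 δ.2] using h1
      have mem2 : ∀ h1 : H1, (W ((0 : H0), h1)).1 ∈ Dstᗮ := by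
        intro h1
        rw [Submodule.mem_orthogonal]
        intro u hu
        have h2 := hip ((V.symm ⟨u, hu⟩ : H0), (0 : H1)) ((0 : H0), h1)
        rw [hext (V.symm ⟨u, hu⟩)] at h2
        simpa using h2
      set A1 : H1 →L[ℂ] H1 := (snd ℂ H0 H1) ∘L W ∘L (inr ℂ H0 H1) with hA1def
      set B1 : Dᗮ →L[ℂ] H1 := (snd ℂ H0 H1) ∘L W ∘L (inl ℂ H0 H1) ∘L Dᗮ.subtypeL with hB1def
      set C1 : H1 →L[ℂ] Dstᗮ :=
        (Submodule.orthogonalProjectionOnto Dstᗮ) ∘L (fst ℂ H0 H1) ∘L W ∘L (inr ℂ H0 H1) with hC1def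
      set D1 : Dᗮ →L[ℂ] Dstᗮ :=
        (Submodule.orthogonalProjectionOnto Dstᗮ) ∘L (fst ℂ H0 H1) ∘L W ∘L (inl ℂ H0 H1) ∘L Dᗮ.subtypeL
        with hD1def
      have hA1 : ∀ h1 : H1, A1 h1 = (W (0, h1)).2 := fun _ => rfl
      have hB1 : ∀ δ : Dᗮ, B1 δ = (W ((δ : H0), 0)).2 := fun _ => rfl
      have hC1 : ∀ h1 : H1, C1 h1 = Submodule.orthogonalProjectionOnto Dstᗮ ((W (0, h1)).1) := fun _ => rfl
      have hD1 : ∀ δ : Dᗮ, D1 δ = Submodule.orthogonalProjectionOnto Dstᗮ ((W ((δ : H0), 0)).1) := fun _ => rfl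
      have hCc : ∀ h1 : H1, ((C1 h1 : Dstᗮ) : H0) = (W (0, h1)).1 := fun h1 =>
        Submodule.starProjection_eq_self_iff.mpr (mem2 h1)
      have hDc : ∀ δ : Dᗮ, ((D1 δ : Dstᗮ) : H0) = (W ((δ : H0), 0)).1 := fun δ =>
        Submodule.starProjection_eq_self_iff.mpr (mem1 δ)
      refine ⟨A1, B1, C1, D1, ?_, ?_, ?_⟩
      · -- unitary colligation: norm identity
        intro h1 δ
        have hW : W ((δ : H0), h1) = W ((δ : H0), 0) + W (0, h1) := by
          rw [← map_add]
          (congr 1; simp)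
        have e2 : A1 h1 + B1 δ = (W ((δ : H0), h1)).2 := by
          rw [hA1, hB1, hW, Prod.snd_add, add_comm]
        have e1 : ‖C1 h1 + D1 δ‖ = ‖(W ((δ : H0), h1)).1‖ := by
          have : ((C1 h1 + D1 δ : Dstᗮ) : H0) = (W ((δ : H0), h1)).1 := by
            rw [Submodule.coe_add, hCc, hDc, hW, Prod.fst_add, add_comm]
          rw [← this]
          rfl
        rw [e2, e1]
        have hn := hnorm ((δ : H0), h1)
        have hδn : ‖((δ : H0), h1).1‖ = ‖δ‖ := rfl
        rw [hδn] at hn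
        have hh1 : ‖((δ : H0), h1).2‖ = ‖h1‖ := rfl
        rw [hh1] at hn
        linarith
      · -- unitary colligation: surjectivity
        intro y ε
        obtain ⟨p, hp⟩ := hsurjW ((ε : H0), y)
        refine ⟨p.2, Submodule.orthogonalProjectionOnto Dᗮ p.1, ?_, ?_⟩
        · have hdecomp : p = (((Submodule.orthogonalProjectionOnto D p.1 : H0)), (0 : H1))
              + (((Submodule.orthogonalProjectionOnto Dᗮ p.1 : H0)), 0) + (0, p.2) := by
            ext
            · simp only [Prod.fst_add, Prod.snd_add]
              rw [← Submodule.starProjection_apply, ← Submodule.starProjection_apply, Submodule.starProjection_add_starProjection_orthogonal]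
              simp
            · simp
          rw [hdecomp, map_add, map_add, hext] at hp
          have h2 := congrArg Prod.snd hp
          simp only [Prod.snd_add] at h2
          rw [hA1, hB1, add_comm]
          rw [zero_add] at h2
          exact h2
        · have hdecomp : p = (((Submodule.orthogonalProjectionOnto D p.1 : H0)), (0 : H1))
              + (((Submodule.orthogonalProjectionOnto Dᗮ p.1 : H0)), 0) + (0, p.2) := by
            ext
            · simp only [Prod.fst_add, Prod.snd_add]
              rw [← Submodule.starProjection_apply, ← Submodule.starProjection_apply, Submodule.starProjection_add_starProjection_orthogonal]
              simp
            · simp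
          rw [hdecomp, map_add, map_add, hext] at hp
          have h1 := congrArg Prod.fst hp
          simp only [Prod.fst_add] at h1
          have h3 := congrArg (Submodule.orthogonalProjectionOnto Dstᗮ) h1
          rw [map_add, map_add,
            Submodule.orthogonalProjectionOnto_orthogonal_apply_eq_zero
              (V (Submodule.orthogonalProjectionOnto D p.1)).2,
            Submodule.orthogonalProjectionOnto_mem_subspace_eq_self, zero_add] at h3
          rw [hC1, hD1, add_comm]
          exact h3
      · -- feedback formula
        intro h h1
        have hdecomp : (h, h1) = (((Submodule.orthogonalProjectionOnto D h : H0)), (0 : H1))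
            + (((Submodule.orthogonalProjectionOnto Dᗮ h : H0)), 0) + (0, h1) := by
          ext
          · simp only [Prod.fst_add, Prod.snd_add]
            rw [← Submodule.starProjection_apply, ← Submodule.starProjection_apply, Submodule.starProjection_add_starProjection_orthogonal]
            simp
          · simp
        rw [hdecomp, map_add, map_add, hext, Prod.ext_iff]
        constructor
        · simp only [Prod.fst_add]
          rw [hDc, hCc]
        · simp only [Prod.snd_add]
          rw [hB1, hA1, zero_add]
    · rintro ⟨A1, B1, C1, D1, hcol, hsurj1, hfeed⟩
      refine ⟨⟨?_, ?_⟩, ?_⟩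
      · -- norm identity of W
        intro p
        have hfp := hfeed p.1 p.2
        rw [show ((p.1 : H0), (p.2 : H1)) = p from rfl] at hfp
        rw [hfp]
        set d := Submodule.orthogonalProjectionOnto D p.1 with hd
        set δ := Submodule.orthogonalProjectionOnto Dᗮ p.1 with hδ
        have horth : (inner ℂ ((V d : Dst) : H0)
            (((D1 δ : Dstᗮ) : H0) + ((C1 p.2 : Dstᗮ) : H0)) : ℂ) = 0 :=
          Submodule.inner_right_of_mem_orthogonal (V d).2
            (Submodule.add_mem _ (D1 δ).2 (C1 p.2).2)
        have h1 : ‖((V d : Dst) : H0) + ((D1 δ : Dstᗮ) : H0) + ((C1 p.2 : Dstᗮ) : H0)‖ ^ 2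
            = ‖d‖ ^ 2 + ‖C1 p.2 + D1 δ‖ ^ 2 := by
          rw [add_assoc]
          have := norm_add_sq_eq_norm_sq_add_norm_sq_of_inner_eq_zero _ _ horth
          have e1 : ‖((V d : Dst) : H0)‖ = ‖d‖ := by
            rw [Submodule.norm_coe, V.norm_map]
          have e2 : ‖((D1 δ : Dstᗮ) : H0) + ((C1 p.2 : Dstᗮ) : H0)‖ = ‖C1 p.2 + D1 δ‖ := by
            rw [add_comm, ← Submodule.coe_add]
            exact Submodule.norm_coe _
          rw [e1, e2] at this
          rw [pow_two, pow_two, pow_two, this]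
        rw [h1]
        have e3 : ‖B1 δ + A1 p.2‖ = ‖A1 p.2 + B1 δ‖ := by rw [add_comm]
        rw [e3]
        have e4 := Submodule.norm_sq_eq_add_norm_sq_projection p.1 D
        have e5 := hcol p.2 δ
        rw [← hd, ← hδ] at e4
        linarith
      · -- surjectivity of W
        intro q
        obtain ⟨h1, δ, hy, hε⟩ := hsurj1 q.2 (Submodule.orthogonalProjectionOnto Dstᗮ q.1)
        refine ⟨((V.symm (Submodule.orthogonalProjectionOnto Dst q.1) : H0) + (δ : H0), h1), ?_⟩
        rw [hfeed]
        have hd : Submodule.orthogonalProjectionOnto D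
            ((V.symm (Submodule.orthogonalProjectionOnto Dst q.1) : H0) + (δ : H0))
            = V.symm (Submodule.orthogonalProjectionOnto Dst q.1) := by
          rw [map_add, Submodule.orthogonalProjectionOnto_mem_subspace_eq_self,
            Submodule.orthogonalProjectionOnto_apply_of_mem_orthogonal δ.2, add_zero]
        have hδ2 : Submodule.orthogonalProjectionOnto Dᗮ
            ((V.symm (Submodule.orthogonalProjectionOnto Dst q.1) : H0) + (δ : H0)) = δ := by
          rw [map_add,
            Submodule.orthogonalProjectionOnto_orthogonal_apply_eq_zero
              (V.symm (Submodule.orthogonalProjectionOnto Dst q.1)).2,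
            Submodule.orthogonalProjectionOnto_mem_subspace_eq_self, zero_add]
        rw [hd, hδ2, V.apply_symm_apply]
        ext
        · show ((Submodule.orthogonalProjectionOnto Dst q.1 : H0)) + ((D1 δ : Dstᗮ) : H0)
            + ((C1 h1 : Dstᗮ) : H0) = q.1
          have hsum : ((D1 δ : Dstᗮ) : H0) + ((C1 h1 : Dstᗮ) : H0)
              = ((Submodule.orthogonalProjectionOnto Dstᗮ q.1 : H0)) := by
            rw [← Submodule.coe_add, add_comm (D1 δ), hε]
          rw [add_assoc, hsum, ← Submodule.starProjection_apply, ← Submodule.starProjection_apply, Submodule.starProjection_add_starProjection_orthogonal]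
        · show B1 δ + A1 h1 = q.2
          rw [add_comm]
          exact hy
      · -- W extends V
        intro d
        rw [hfeed]
        have h1 : Submodule.orthogonalProjectionOnto D (d : H0) = d :=
          Submodule.orthogonalProjectionOnto_mem_subspace_eq_self d
        have h2 : Submodule.orthogonalProjectionOnto Dᗮ (d : H0) = 0 :=
          Submodule.orthogonalProjectionOnto_orthogonal_apply_eq_zero d.2
        rw [h1, h2]
        simp
  · -- recovery of U1 from W
    intro A1 B1 C1 D1 hfeed
    have hδfact : ∀ δ : Dᗮ, W ((δ : H0), 0) = (((D1 δ : Dstᗮ) : H0), B1 δ) := by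
      intro δ
      rw [hfeed]
      have h1 : Submodule.orthogonalProjectionOnto D (δ : H0) = 0 :=
        Submodule.orthogonalProjectionOnto_apply_of_mem_orthogonal δ.2
      have h2 : Submodule.orthogonalProjectionOnto Dᗮ (δ : H0) = δ :=
        Submodule.orthogonalProjectionOnto_mem_subspace_eq_self δ
      rw [h1, h2]
      simp
    have h1fact : ∀ h1 : H1, W (0, h1) = (((C1 h1 : Dstᗮ) : H0), A1 h1) := by
      intro h1
      rw [hfeed]
      simp
    refine ⟨fun h1 => by rw [h1fact], fun δ => by rw [hδfact],
      fun h1 => by rw [h1fact]; exact (Submodule.orthogonalProjectionOnto_mem_subspace_eq_self _).symm,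
      fun δ => by rw [hδfact]; exact (Submodule.orthogonalProjectionOnto_mem_subspace_eq_self _).symm⟩
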